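/- arXiv:2509.15403 — 4 statements merged into one kernel-verified Lean document; each statement's English description precedes it below -/
import Mathlib

section
/- Let L₁, …, L_{n+1} : [0,1] → [0,1] be antitone functions, α ∈ (0,1), and suppose L_i(1) ≤ α for all i. Define λ̂ = inf{λ ∈ [0,1] : R̂_n(λ) ≤ α - (1-α)/n} (with λ̂ = 1 if the set is empty) and λ̂' = inf{λ ∈ [0,1] : R̂_{n+1}(λ) ≤ α}. Then λ̂' ≤ λ̂. -/
/-- With antitone losses L_i : [0,1] → [0,1], L_i(1) ≤ α,
    λ̂ = inf{λ : R̂_n(λ) ≤ α - (1-α)/n} (1 if empty) and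
    λ̂' = inf{λ : R̂_{n+1}(λ) ≤ α}, we have λ̂' ≤ λ̂. -/
theorem stmt_7 (n : ℕ) (hn : 1 ≤ n) (L : ℕ → ℝ → ℝ)
    (hL : ∀ i, ∀ lam ∈ Set.Icc (0:ℝ) 1, L i lam ∈ Set.Icc (0:ℝ) 1)
    (hant : ∀ i, AntitoneOn (L i) (Set.Icc (0:ℝ) 1))
    (α : ℝ) (hα : α ∈ Set.Ioo (0:ℝ) 1)
    (hL1 : ∀ i, L i 1 ≤ α) :
    sInf {lam ∈ Set.Icc (0:ℝ) 1 | (∑ i ∈ Finset.range (n+1), L i lam) / (n+1) ≤ α} ≤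
      sInf ({lam ∈ Set.Icc (0:ℝ) 1 |
        (∑ i ∈ Finset.range n, L i lam) / n ≤ α - (1 - α) / n} ∪ {1}) := by
  have hnpos : (0:ℝ) < n := by exact_mod_cast hn
  have hnp1 : (0:ℝ) < (n:ℝ) + 1 := by linarith
  apply csInf_le_csInf
  · exact ⟨0, fun x hx => hx.1.1⟩
  · exact ⟨1, Or.inr rfl⟩
  · rintro lam (⟨hmem, hsum⟩ | rfl)
    · refine ⟨hmem, ?_⟩
      rw [div_le_iff₀ hnp1]
      rw [div_le_iff₀ hnpos] at hsum
      rw [Finset.sum_range_succ]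
      have hLn : L n lam ≤ 1 := (hL n lam hmem).2
      have he : (α - (1 - α) / ↑n) * ↑n = α * n - (1 - α) := by field_simp
      rw [he] at hsum
      linarith
    · refine ⟨⟨by norm_num, le_refl 1⟩, ?_⟩
      rw [div_le_iff₀ hnp1]
      calc (∑ i ∈ Finset.range (n+1), L i 1) ≤ ∑ i ∈ Finset.range (n+1), α :=
            Finset.sum_le_sum fun i _ => hL1 i
        _ = ((n:ℝ)+1) * α := by simp [Finset.sum_const, Finset.card_range]
        _ = α * ((n:ℝ)+1) := mul_comm _ _
end

section
/- Let L₁, …, L_{n+1} : [0,1] → [0,1] be antitone and right-continuous with L_i(1) ≤ α for α ∈ (0,1). With λ̂' = inf{λ ∈ [0,1] : (1/(n+1)) ∑_{i=1}^{n+1} L_i(λ) ≤ α}, we have (1/(n+1)) ∑_{i=1}^{n+1} L_i(λ̂') ≤ α; i.e., the infimum is attained as an inequality at λ̂'. -/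
/-- With antitone, right-continuous losses L_i : [0,1] → [0,1], L_i(1) ≤ α, and
    λ̂' = inf{λ ∈ [0,1] : R̂_{n+1}(λ) ≤ α}, the bound R̂_{n+1}(λ̂') ≤ α holds. -/
theorem stmt_8 (n : ℕ) (hn : 1 ≤ n) (L : ℕ → ℝ → ℝ)
    (hL : ∀ i, ∀ lam ∈ Set.Icc (0:ℝ) 1, L i lam ∈ Set.Icc (0:ℝ) 1)
    (hant : ∀ i, AntitoneOn (L i) (Set.Icc (0:ℝ) 1))
    (hrc : ∀ i, ∀ lam ∈ Set.Ico (0:ℝ) 1, ContinuousWithinAt (L i) (Set.Ici lam) lam)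
    (α : ℝ) (hα : α ∈ Set.Ioo (0:ℝ) 1)
    (hL1 : ∀ i, L i 1 ≤ α) :
    (∑ i ∈ Finset.range (n+1),
        L i (sInf {lam ∈ Set.Icc (0:ℝ) 1 |
          (∑ j ∈ Finset.range (n+1), L j lam) / (n+1) ≤ α})) / (n+1) ≤ α := by
  set f : ℝ → ℝ := fun lam => (∑ j ∈ Finset.range (n+1), L j lam) / (n+1) with hf
  set S : Set ℝ := {lam ∈ Set.Icc (0:ℝ) 1 | f lam ≤ α} with hS
  have hnpos : (0:ℝ) < (n:ℝ)+1 := by positivity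
  have h1S : (1:ℝ) ∈ S := by
    refine ⟨⟨zero_le_one, le_refl 1⟩, ?_⟩
    show (∑ j ∈ Finset.range (n+1), L j 1) / (n+1) ≤ α
    rw [div_le_iff₀ hnpos]
    calc ∑ j ∈ Finset.range (n+1), L j 1
        ≤ ∑ _j ∈ Finset.range (n+1), α := Finset.sum_le_sum (fun j _ => hL1 j)
      _ = α * ((n:ℝ)+1) := by
          rw [Finset.sum_const, Finset.card_range]
          push_cast; ring
  have hne : S.Nonempty := ⟨1, h1S⟩
  have hbdd : BddBelow S := ⟨0, fun x hx => hx.1.1⟩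
  have hsub : S ⊆ Set.Ici (sInf S) := fun x hx => csInf_le hbdd hx
  have hm : sInf S ∈ Set.Icc (0:ℝ) 1 := ⟨le_csInf hne (fun x hx => hx.1.1), csInf_le hbdd h1S⟩
  show f (sInf S) ≤ α
  rcases eq_or_lt_of_le hm.2 with heq | hlt
  · rw [heq]; exact h1S.2
  · have hcont : ContinuousWithinAt f (Set.Ici (sInf S)) (sInf S) := by
      apply ContinuousWithinAt.div_const
      exact tendsto_finset_sum _ (fun j _ => hrc j _ ⟨hm.1, hlt⟩)
    have hcont' : ContinuousWithinAt f S (sInf S) := hcont.mono hsub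
    have hcl : sInf S ∈ closure S := csInf_mem_closure hne hbdd
    have hnb : (nhdsWithin (sInf S) S).NeBot := mem_closure_iff_nhdsWithin_neBot.mp hcl
    exact le_of_tendsto hcont' (Filter.eventually_of_mem self_mem_nhdsWithin (fun x hx => hx.2))
end

section
/- (Conformal risk control) Let L₁, …, L_{n+1} be random functions from [0,1] to [0,1] whose joint distribution is exchangeable (invariant under permutations of indices), each almost surely antitone and right-continuous with L_i(1) ≤ α for a fixed α ∈ (0,1). Let λ̂ = inf{λ : (1/n) ∑_{i=1}^n L_i(λ) ≤ α - (1-α)/n} (taking λ̂ = 1 if no such λ exists). Then E[L_{n+1}(λ̂)] ≤ α. -/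
open MeasureTheory

/-! Auxiliary machinery for conformal risk control: we define the "oracle"
threshold `crcG` computed from all `n+1` loss functions via rational points
(so that it is measurable on the product space), and a measurable functional
`crcPhi` which, on nice (antitone, right-continuous) tuples, evaluates the
`j`-th loss at the oracle threshold. -/

noncomputable def crcAux (n : ℕ) (α : ℝ) (f : Fin (n+1) → ℝ → ℝ) (q : ℚ) : ℝ :=
  if (0:ℝ) ≤ (q:ℝ) ∧ (q:ℝ) ≤ 1 ∧ (∑ i, f i (q:ℝ)) ≤ ((n:ℝ)+1)*α then (q:ℝ) else 1

noncomputable def crcG (n : ℕ) (α : ℝ) (f : Fin (n+1) → ℝ → ℝ) : ℝ :=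
  ⨅ q : ℚ, crcAux n α f q

noncomputable def crcPhi (n : ℕ) (α : ℝ) (j : Fin (n+1)) (f : Fin (n+1) → ℝ → ℝ) : ℝ :=
  if crcG n α f = 1 then f j 1
  else ⨆ q : ℚ, if crcG n α f < (q:ℝ) ∧ (q:ℝ) ≤ 1 then f j (q:ℝ) else 0

lemma crcAux_nonneg (n : ℕ) (α : ℝ) (f : Fin (n+1) → ℝ → ℝ) (q : ℚ) :
    0 ≤ crcAux n α f q := by
  unfold crcAux; split_ifs with h
  · exact h.1
  · exact zero_le_one

lemma crcAux_bddBelow (n : ℕ) (α : ℝ) (f : Fin (n+1) → ℝ → ℝ) :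
    BddBelow (Set.range (crcAux n α f)) :=
  ⟨0, by rintro _ ⟨q, rfl⟩; exact crcAux_nonneg n α f q⟩

lemma crcG_nonneg (n : ℕ) (α : ℝ) (f : Fin (n+1) → ℝ → ℝ) : 0 ≤ crcG n α f :=
  le_ciInf (crcAux_nonneg n α f)

lemma crcG_le_one (n : ℕ) (α : ℝ) (f : Fin (n+1) → ℝ → ℝ) : crcG n α f ≤ 1 := by
  refine (ciInf_le (crcAux_bddBelow n α f) (2:ℚ)).trans ?_
  unfold crcAux
  rw [if_neg]
  push_neg
  intro _
  norm_num

lemma crcG_le_of_qualifies (n : ℕ) (α : ℝ) (f : Fin (n+1) → ℝ → ℝ) (q : ℚ)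
    (h0 : (0:ℝ) ≤ (q:ℝ)) (h1 : (q:ℝ) ≤ 1) (hs : (∑ i, f i (q:ℝ)) ≤ ((n:ℝ)+1)*α) :
    crcG n α f ≤ (q:ℝ) := by
  refine (ciInf_le (crcAux_bddBelow n α f) q).trans ?_
  unfold crcAux
  rw [if_pos ⟨h0, h1, hs⟩]

lemma measurable_crc_eval (n : ℕ) (i : Fin (n+1)) (x : ℝ) :
    Measurable fun f : Fin (n+1) → ℝ → ℝ => f i x :=
  (measurable_pi_apply x).comp (measurable_pi_apply i)

lemma crcG_measurable (n : ℕ) (α : ℝ) : Measurable (crcG n α) := by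
  refine Measurable.iInf fun q => ?_
  unfold crcAux
  refine Measurable.ite ?_ measurable_const measurable_const
  refine (MeasurableSet.const _).inter ((MeasurableSet.const _).inter ?_)
  exact measurableSet_le (Finset.measurable_sum _ fun i _ => measurable_crc_eval n i _)
    measurable_const

lemma crcPhi_measurable (n : ℕ) (α : ℝ) (j : Fin (n+1)) : Measurable (crcPhi n α j) := by
  unfold crcPhi
  refine Measurable.ite ((crcG_measurable n α) (measurableSet_singleton 1))
    (measurable_crc_eval n j 1) ?_
  refine Measurable.iSup fun q => ?_
  refine Measurable.ite ?_ (measurable_crc_eval n j _) measurable_const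
  exact (measurableSet_lt (crcG_measurable n α) measurable_const).inter
    (MeasurableSet.const _)

lemma crcG_perm (n : ℕ) (α : ℝ) (σ : Equiv.Perm (Fin (n+1))) (f : Fin (n+1) → ℝ → ℝ) :
    crcG n α (fun i => f (σ i)) = crcG n α f := by
  unfold crcG crcAux
  refine iInf_congr fun q => ?_
  rw [Equiv.sum_comp σ (fun i => f i (q:ℝ))]

lemma crcPhi_perm (n : ℕ) (α : ℝ) (σ : Equiv.Perm (Fin (n+1))) (j : Fin (n+1))
    (f : Fin (n+1) → ℝ → ℝ) :
    crcPhi n α j (fun i => f (σ i)) = crcPhi n α (σ j) f := by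
  unfold crcPhi
  rw [crcG_perm n α σ f]

section Pointwise

variable {n : ℕ} {α : ℝ} {f : Fin (n+1) → ℝ → ℝ}

/-- On a nice tuple `f`, the average loss at the oracle threshold is controlled. -/
lemma crc_sum_le (h01 : ∀ i, ∀ x ∈ Set.Icc (0:ℝ) 1, f i x ∈ Set.Icc (0:ℝ) 1)
    (hant : ∀ i, AntitoneOn (f i) (Set.Icc (0:ℝ) 1))
    (hrc : ∀ i, ∀ x ∈ Set.Ico (0:ℝ) 1, ContinuousWithinAt (f i) (Set.Ici x) x)
    (hL1 : ∀ i, f i 1 ≤ α) :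
    (∑ i, f i (crcG n α f)) ≤ ((n:ℝ)+1)*α := by
  set g := crcG n α f with hgdef
  have hg0 : 0 ≤ g := crcG_nonneg n α f
  rcases eq_or_lt_of_le (crcG_le_one n α f) with hg1 | hg1
  · rw [hgdef, hg1]
    calc (∑ i, f i 1) ≤ ∑ _i : Fin (n+1), α := Finset.sum_le_sum fun i _ => hL1 i
    _ = ((n:ℝ)+1)*α := by
      rw [Finset.sum_const, Finset.card_univ, Fintype.card_fin, nsmul_eq_mul]
      push_cast; ring
  · -- g < 1 : approximate from the right by qualifying rationals
    have hδ : ∀ k : ℕ, (0:ℝ) < min (1-g) (1/(k+1)) := fun k =>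
      lt_min (by linarith) (by positivity)
    have hlt : ∀ k : ℕ, crcG n α f < g + min (1-g) (1/((k:ℝ)+1)) := fun k =>
      lt_add_of_pos_right _ (hδ k)
    choose q hq using fun k => exists_lt_of_ciInf_lt (hlt k)
    have hcond : ∀ k, (0:ℝ) ≤ (q k : ℝ) ∧ ((q k : ℝ)) ≤ 1 ∧
        (∑ i, f i ((q k : ℝ))) ≤ ((n:ℝ)+1)*α := by
      intro k
      by_contra hc
      have : crcAux n α f (q k) = 1 := by
        unfold crcAux
        rw [if_neg]
        tauto
      have h2 := hq k
      rw [this] at h2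
      have := min_le_left (1-g) (1/((k:ℝ)+1))
      linarith
    have hauxq : ∀ k, crcAux n α f (q k) = (q k : ℝ) := by
      intro k
      unfold crcAux
      rw [if_pos (hcond k)]
    have hge : ∀ k, g ≤ (q k : ℝ) := fun k => by
      rw [← hauxq k]; exact ciInf_le (crcAux_bddBelow n α f) (q k)
    have hub : ∀ k, (q k : ℝ) ≤ g + 1/((k:ℝ)+1) := fun k => by
      have h2 := hq k
      rw [hauxq k] at h2
      have := min_le_right (1-g) (1/((k:ℝ)+1))
      linarith
    have hqt : Filter.Tendsto (fun k => ((q k : ℝ))) Filter.atTop (nhds g) := by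
      have h2 : Filter.Tendsto (fun k : ℕ => g + 1/((k:ℝ)+1)) Filter.atTop (nhds g) := by
        simpa using tendsto_const_nhds.add (tendsto_one_div_add_atTop_nhds_zero_nat : Filter.Tendsto (fun k : ℕ => 1 / ((k:ℝ) + 1)) Filter.atTop (nhds 0))
      exact tendsto_of_tendsto_of_tendsto_of_le_of_le tendsto_const_nhds h2 hge hub
    have hS : ContinuousWithinAt (fun x => ∑ i, f i x) (Set.Ici g) g :=
      tendsto_finset_sum _ (fun i _ => hrc i g ⟨hg0, hg1⟩)
    have hcomp : Filter.Tendsto (fun k => ∑ i, f i ((q k : ℝ))) Filter.atTop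
        (nhds (∑ i, f i g)) := by
      refine hS.tendsto.comp ?_
      exact tendsto_nhdsWithin_of_tendsto_nhds_of_eventually_within _ hqt
        (Filter.Eventually.of_forall hge)
    exact le_of_tendsto hcomp (Filter.Eventually.of_forall fun k => (hcond k).2.2)

/-- The rational supremum from the right recovers the value of a nice function. -/
lemma crc_sup_eq (h01 : ∀ i, ∀ x ∈ Set.Icc (0:ℝ) 1, f i x ∈ Set.Icc (0:ℝ) 1)
    (hant : ∀ i, AntitoneOn (f i) (Set.Icc (0:ℝ) 1))
    (hrc : ∀ i, ∀ x ∈ Set.Ico (0:ℝ) 1, ContinuousWithinAt (f i) (Set.Ici x) x)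
    (g : ℝ) (hg0 : 0 ≤ g) (hg1 : g ≤ 1) (j : Fin (n+1)) (hglt : g < 1) :
    (⨆ q : ℚ, if g < (q:ℝ) ∧ (q:ℝ) ≤ 1 then f j (q:ℝ) else 0) = f j g := by
  have hgIcc : g ∈ Set.Icc (0:ℝ) 1 := ⟨hg0, hg1⟩
  have hbdd : BddAbove (Set.range fun q : ℚ =>
      if g < (q:ℝ) ∧ (q:ℝ) ≤ 1 then f j (q:ℝ) else 0) := by
    refine ⟨1, ?_⟩
    rintro _ ⟨q, rfl⟩
    dsimp only
    split_ifs with h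
    · exact (h01 j _ ⟨hg0.trans h.1.le, h.2⟩).2
    · exact zero_le_one
  refine le_antisymm (ciSup_le fun q => ?_) ?_
  · split_ifs with h
    · exact hant j hgIcc ⟨hg0.trans h.1.le, h.2⟩ h.1.le
    · exact (h01 j g hgIcc).1
  · -- approximate from the right
    have h : ∀ k : ℕ, g < min 1 (g + 1/((k:ℝ)+1)) := fun k =>
      lt_min hglt (lt_add_of_pos_right _ (by positivity))
    choose q hq1 hq2 using fun k => exists_rat_btwn (h k)
    have hqle1 : ∀ k, ((q k : ℝ)) ≤ 1 := fun k => ((hq2 k).trans_le (min_le_left _ _)).le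
    have hqt : Filter.Tendsto (fun k => ((q k : ℝ))) Filter.atTop (nhds g) := by
      have h2 : Filter.Tendsto (fun k : ℕ => g + 1/((k:ℝ)+1)) Filter.atTop (nhds g) := by
        simpa using tendsto_const_nhds.add (tendsto_one_div_add_atTop_nhds_zero_nat : Filter.Tendsto (fun k : ℕ => 1 / ((k:ℝ) + 1)) Filter.atTop (nhds 0))
      exact tendsto_of_tendsto_of_tendsto_of_le_of_le tendsto_const_nhds h2
        (fun k => (hq1 k).le) (fun k => ((hq2 k).trans_le (min_le_right _ _)).le)
    have hcomp : Filter.Tendsto (fun k => f j ((q k : ℝ))) Filter.atTop (nhds (f j g)) := by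
      refine (hrc j g ⟨hg0, hglt⟩).tendsto.comp ?_
      exact tendsto_nhdsWithin_of_tendsto_nhds_of_eventually_within _ hqt
        (Filter.Eventually.of_forall fun k => (hq1 k).le)
    refine le_of_tendsto hcomp (Filter.Eventually.of_forall fun k => ?_)
    have := le_ciSup hbdd (q k)
    rwa [if_pos ⟨hq1 k, hqle1 k⟩] at this

/-- The oracle threshold is below the empirical estimator. -/
lemma crc_G_le_sInf (hn : 1 ≤ n)
    (h01 : ∀ i, ∀ x ∈ Set.Icc (0:ℝ) 1, f i x ∈ Set.Icc (0:ℝ) 1)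
    (hant : ∀ i, AntitoneOn (f i) (Set.Icc (0:ℝ) 1))
    (G : ℝ) (hG1 : G ≤ 1)
    (hGq : ∀ q : ℚ, (0:ℝ) ≤ (q:ℝ) → (q:ℝ) ≤ 1 →
      (∑ i, f i (q:ℝ)) ≤ ((n:ℝ)+1)*α → G ≤ (q:ℝ)) :
    G ≤ sInf ({lam ∈ Set.Icc (0:ℝ) 1 |
        (∑ i : Fin n, f i.castSucc lam) / n ≤ α - (1 - α) / n} ∪ {1}) := by
  have hnpos : (0:ℝ) < n := by exact_mod_cast hn
  refine le_csInf ⟨1, Or.inr rfl⟩ fun b hb => ?_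
  rcases hb with ⟨hbIcc, hbavg⟩ | hb1
  · -- b qualifies for the empirical estimator
    have hsumb : (∑ i : Fin n, f i.castSucc b) ≤ (n:ℝ)*α - (1-α) := by
      have h2 := (div_le_iff₀ hnpos).mp hbavg
      have : (α - (1 - α) / ↑n) * ↑n = (n:ℝ)*α - (1-α) := by field_simp
      linarith [this ▸ h2]
    have Hq : ∀ q : ℚ, b ≤ (q:ℝ) → (q:ℝ) ≤ 1 → G ≤ (q:ℝ) := by
      intro q hbq hq1
      refine hGq q (hbIcc.1.trans hbq) hq1 ?_
      have hqIcc : (q:ℝ) ∈ Set.Icc (0:ℝ) 1 := ⟨hbIcc.1.trans hbq, hq1⟩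
      rw [Fin.sum_univ_castSucc]
      have h1 : (∑ i : Fin n, f i.castSucc (q:ℝ)) ≤ ∑ i : Fin n, f i.castSucc b :=
        Finset.sum_le_sum fun i _ => hant _ hbIcc hqIcc hbq
      have h2 : f (Fin.last n) (q:ℝ) ≤ 1 := (h01 _ _ hqIcc).2
      linarith
    rcases eq_or_lt_of_le hbIcc.2 with hb1 | hb1
    · rw [hb1]; exact hG1
    · by_contra hc
      push_neg at hc
      obtain ⟨q, hq1, hq2⟩ := exists_rat_btwn (lt_min hc hb1)
      have := Hq q hq1.le ((hq2.trans_le (min_le_right _ _)).le)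
      have h3 := hq2.trans_le (min_le_left _ _)
      linarith
  · rw [Set.mem_singleton_iff.mp hb1]; exact hG1

end Pointwise

/-- (Conformal risk control) Let L₁, …, L_{n+1} : Ω → ([0,1] → [0,1]) be an
    exchangeable family of random loss functions, almost surely antitone,
    right-continuous, and with L_i(1) ≤ α.  With
    λ̂(ω) = inf({λ ∈ [0,1] : (1/n) ∑_{i<n} L_i(ω)(λ) ≤ α - (1-α)/n} ∪ {1})
    (so λ̂ = 1 when the set is empty), we have E[L_{n+1}(λ̂)] ≤ α. -/
theorem stmt_9 {Ω : Type*} [MeasurableSpace Ω] (μ : Measure Ω) [IsProbabilityMeasure μ]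
    (n : ℕ) (hn : 1 ≤ n) (α : ℝ) (hα : α ∈ Set.Ioo (0:ℝ) 1)
    (L : Fin (n+1) → Ω → ℝ → ℝ)
    (hmeas : Measurable fun ω => fun i : Fin (n+1) => L i ω)
    (hexch : ∀ σ : Equiv.Perm (Fin (n+1)),
      Measure.map (fun ω => fun i : Fin (n+1) => L (σ i) ω) μ =
        Measure.map (fun ω => fun i : Fin (n+1) => L i ω) μ)
    (h01 : ∀ᵐ ω ∂μ, ∀ i, ∀ lam ∈ Set.Icc (0:ℝ) 1, L i ω lam ∈ Set.Icc (0:ℝ) 1)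
    (hant : ∀ᵐ ω ∂μ, ∀ i, AntitoneOn (L i ω) (Set.Icc (0:ℝ) 1))
    (hrc : ∀ᵐ ω ∂μ, ∀ i, ∀ lam ∈ Set.Ico (0:ℝ) 1,
      ContinuousWithinAt (L i ω) (Set.Ici lam) lam)
    (hL1 : ∀ᵐ ω ∂μ, ∀ i, L i ω 1 ≤ α)
    (lamHat : Ω → ℝ)
    (hlamHat : ∀ ω, lamHat ω =
      sInf ({lam ∈ Set.Icc (0:ℝ) 1 |
        (∑ i : Fin n, L i.castSucc ω lam) / n ≤ α - (1 - α) / n} ∪ {1}))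
    (hint : Integrable (fun ω => L (Fin.last n) ω (lamHat ω)) μ) :
    ∫ ω, L (Fin.last n) ω (lamHat ω) ∂μ ≤ α := by
  classical
  set X : Ω → (Fin (n+1) → ℝ → ℝ) := fun ω i => L i ω with hXdef
  have hXmeas : Measurable X := hmeas
  -- the key pointwise facts, valid almost everywhere
  have key : ∀ᵐ ω ∂μ, (∀ j, crcPhi n α j (X ω) = L j ω (crcG n α (X ω))) ∧
      ((∑ i, L i ω (crcG n α (X ω))) ≤ ((n:ℝ)+1)*α) ∧
      (L (Fin.last n) ω (lamHat ω) ≤ crcPhi n α (Fin.last n) (X ω)) ∧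
      (∀ j, crcPhi n α j (X ω) ∈ Set.Icc (0:ℝ) 1) := by
    filter_upwards [h01, hant, hrc, hL1] with ω p1 p2 p3 p4
    have hg0 : 0 ≤ crcG n α (X ω) := crcG_nonneg n α (X ω)
    have hg1 : crcG n α (X ω) ≤ 1 := crcG_le_one n α (X ω)
    have k1 : ∀ j, crcPhi n α j (X ω) = L j ω (crcG n α (X ω)) := by
      intro j
      by_cases hge : crcG n α (X ω) = 1
      · have heq : crcPhi n α j (X ω) = X ω j 1 := by
          unfold crcPhi; rw [if_pos hge]
        rw [heq, hge]
      · have hglt : crcG n α (X ω) < 1 := lt_of_le_of_ne hg1 hge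
        simp only [crcPhi, if_neg hge]
        exact crc_sup_eq p1 p2 p3 _ hg0 hg1 j hglt
    have k2 : (∑ i, L i ω (crcG n α (X ω))) ≤ ((n:ℝ)+1)*α :=
      crc_sum_le p1 p2 p3 p4
    have hlam0 : 0 ≤ lamHat ω := by
      rw [hlamHat ω]
      refine le_csInf ⟨1, Or.inr rfl⟩ fun b hb => ?_
      rcases hb with ⟨hbIcc, _⟩ | hb1
      · exact hbIcc.1
      · rw [Set.mem_singleton_iff.mp hb1]; exact zero_le_one
    have hlam1 : lamHat ω ≤ 1 := by
      rw [hlamHat ω]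
      refine csInf_le ⟨0, ?_⟩ (Or.inr rfl)
      rintro b (⟨hbIcc, _⟩ | hb1)
      · exact hbIcc.1
      · rw [Set.mem_singleton_iff.mp hb1]; exact zero_le_one
    have hGle : crcG n α (X ω) ≤ lamHat ω := by
      rw [hlamHat ω]
      exact crc_G_le_sInf hn p1 p2 _ hg1 (fun q h0 h1 hs =>
        crcG_le_of_qualifies n α (X ω) q h0 h1 hs)
    have k3 : L (Fin.last n) ω (lamHat ω) ≤ crcPhi n α (Fin.last n) (X ω) := by
      rw [k1]
      exact p2 (Fin.last n) ⟨hg0, hg1⟩ ⟨hlam0, hlam1⟩ hGle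
    have k4 : ∀ j, crcPhi n α j (X ω) ∈ Set.Icc (0:ℝ) 1 := by
      intro j
      rw [k1 j]
      exact p1 j _ ⟨hg0, hg1⟩
    exact ⟨k1, k2, k3, k4⟩
  -- integrability of the Φ-functionals
  have hPhiInt : ∀ j, Integrable (fun ω => crcPhi n α j (X ω)) μ := by
    intro j
    refine Integrable.mono' (integrable_const 1)
      ((crcPhi_measurable n α j).comp hXmeas).aestronglyMeasurable ?_
    filter_upwards [key] with ω hω
    rw [Real.norm_eq_abs, abs_le]
    exact ⟨by linarith [(hω.2.2.2 j).1], (hω.2.2.2 j).2⟩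
  -- by exchangeability, all the integrals ∫ Φ_j agree
  have hIeq : ∀ j, (∫ ω, crcPhi n α j (X ω) ∂μ) =
      ∫ ω, crcPhi n α (Fin.last n) (X ω) ∂μ := by
    intro j
    set σ : Equiv.Perm (Fin (n+1)) := Equiv.swap j (Fin.last n) with hσ
    have hXσmeas : Measurable (fun ω => fun i : Fin (n+1) => L (σ i) ω) :=
      measurable_pi_lambda _ fun i => (measurable_pi_apply (σ i)).comp hXmeas
    calc (∫ ω, crcPhi n α j (X ω) ∂μ)
        = ∫ f, crcPhi n α j f ∂(Measure.map (fun ω => fun i : Fin (n+1) => L i ω) μ) :=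
          (integral_map hXmeas.aemeasurable
            (crcPhi_measurable n α j).aestronglyMeasurable).symm
      _ = ∫ f, crcPhi n α j f ∂(Measure.map (fun ω => fun i : Fin (n+1) => L (σ i) ω) μ) := by
          rw [hexch σ]
      _ = ∫ ω, crcPhi n α j (fun i => L (σ i) ω) ∂μ :=
          integral_map hXσmeas.aemeasurable
            (crcPhi_measurable n α j).aestronglyMeasurable
      _ = ∫ ω, crcPhi n α (σ j) (X ω) ∂μ := by
          refine integral_congr_ae (Filter.Eventually.of_forall fun ω => ?_)
          exact crcPhi_perm n α σ j (X ω)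
      _ = ∫ ω, crcPhi n α (Fin.last n) (X ω) ∂μ := by
          rw [hσ, Equiv.swap_apply_left]
  -- summing over j bounds the common value
  have hsum : (∑ j : Fin (n+1), ∫ ω, crcPhi n α j (X ω) ∂μ) ≤ ((n:ℝ)+1)*α := by
    rw [← integral_finset_sum _ fun j _ => hPhiInt j]
    have hconst : (∫ _ω, ((n:ℝ)+1)*α ∂μ) = ((n:ℝ)+1)*α := by simp
    rw [← hconst]
    refine integral_mono_ae (integrable_finset_sum _ fun j _ => hPhiInt j)
      (integrable_const _) ?_
    filter_upwards [key] with ω hω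
    calc (∑ j, crcPhi n α j (X ω)) = ∑ j, L j ω (crcG n α (X ω)) :=
          Finset.sum_congr rfl fun j _ => hω.1 j
      _ ≤ ((n:ℝ)+1)*α := hω.2.1
  have hsum' : (∑ j : Fin (n+1), ∫ ω, crcPhi n α j (X ω) ∂μ) =
      ((n:ℝ)+1) * ∫ ω, crcPhi n α (Fin.last n) (X ω) ∂μ := by
    rw [Finset.sum_congr rfl fun j _ => hIeq j, Finset.sum_const, Finset.card_univ,
      Fintype.card_fin, nsmul_eq_mul]
    push_cast; ring
  have hlast : (∫ ω, crcPhi n α (Fin.last n) (X ω) ∂μ) ≤ α := by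
    rw [hsum'] at hsum
    have hpos : (0:ℝ) < (n:ℝ)+1 := by positivity
    nlinarith
  calc (∫ ω, L (Fin.last n) ω (lamHat ω) ∂μ)
      ≤ ∫ ω, crcPhi n α (Fin.last n) (X ω) ∂μ := by
        refine integral_mono_ae hint (hPhiInt _) ?_
        filter_upwards [key] with ω hω
        exact hω.2.2.1
    _ ≤ α := hlast
end

section
/- Let L₁,…,L_{n+1} : [0,1] → [0,1] be deterministic antitone right-continuous functions with L_i(1) ≤ α, and let λ̂' = inf{λ : (1/(n+1)) ∑_{i=1}^{n+1} L_i(λ) ≤ α}. If an index I is drawn uniformly from {1,…,n+1}, then E[L_I(λ̂')] = (1/(n+1)) ∑_{i=1}^{n+1} L_i(λ̂') ≤ α. -/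
open MeasureTheory

/-- For deterministic antitone right-continuous losses with L_i(1) ≤ α and
    λ̂' = inf{λ ∈ [0,1] : (1/(n+1)) ∑ L_i(λ) ≤ α}, a uniformly random index I
    satisfies E[L_I(λ̂')] = (1/(n+1)) ∑_i L_i(λ̂') ≤ α. -/
theorem stmt_10 (n : ℕ) (hn : 1 ≤ n) (L : Fin (n+1) → ℝ → ℝ)
    (hL : ∀ i, ∀ lam ∈ Set.Icc (0:ℝ) 1, L i lam ∈ Set.Icc (0:ℝ) 1)
    (hant : ∀ i, AntitoneOn (L i) (Set.Icc (0:ℝ) 1))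
    (hrc : ∀ i, ∀ lam ∈ Set.Ico (0:ℝ) 1, ContinuousWithinAt (L i) (Set.Ici lam) lam)
    (α : ℝ) (hα : α ∈ Set.Ioo (0:ℝ) 1)
    (hL1 : ∀ i, L i 1 ≤ α)
    (lamHat' : ℝ)
    (hlamHat' : lamHat' =
      sInf {lam ∈ Set.Icc (0:ℝ) 1 | (∑ i, L i lam) / (n+1) ≤ α}) :
    (∫ i, L i lamHat' ∂((PMF.uniformOfFintype (Fin (n+1))).toMeasure)
        = (∑ i, L i lamHat') / (n+1)) ∧
    (∑ i, L i lamHat') / (n+1) ≤ α := by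
  constructor
  · rw [PMF.integral_eq_sum]
    simp only [PMF.uniformOfFintype_apply, Fintype.card_fin]
    rw [Finset.sum_div]
    refine Finset.sum_congr rfl fun i _ => ?_
    rw [ENNReal.toReal_inv, ENNReal.toReal_natCast, smul_eq_mul, inv_mul_eq_div]
    push_cast
    ring
  · set S := {lam ∈ Set.Icc (0:ℝ) 1 | (∑ i, L i lam) / (n+1) ≤ α} with hS
    have h1S : (1:ℝ) ∈ S := by
      refine ⟨by norm_num, ?_⟩
      rw [div_le_iff₀ (by positivity)]
      calc ∑ i, L i 1 ≤ ∑ _i : Fin (n+1), α := Finset.sum_le_sum fun i _ => hL1 i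
        _ = α * (n+1) := by simp [mul_comm]
    have hbdd : BddBelow S := ⟨0, fun x hx => hx.1.1⟩
    have hne : S.Nonempty := ⟨1, h1S⟩
    have hle1 : lamHat' ≤ 1 := hlamHat' ▸ csInf_le hbdd h1S
    have hge0 : 0 ≤ lamHat' := hlamHat' ▸ le_csInf hne fun x hx => hx.1.1
    rcases eq_or_lt_of_le hle1 with heq | hlt
    · rw [heq]; exact h1S.2
    · -- right continuity argument
      have hf : ContinuousWithinAt (fun lam => (∑ i, L i lam) / (n+1))
          (Set.Ici lamHat') lamHat' := by
        apply ContinuousWithinAt.div_const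
        exact tendsto_finset_sum _ fun i _ => hrc i lamHat' ⟨hge0, hlt⟩
      refine le_of_forall_pos_le_add fun ε hε => ?_
      rw [Metric.continuousWithinAt_iff] at hf
      obtain ⟨δ, hδ, hfd⟩ := hf ε hε
      have : lamHat' < lamHat' + δ := by linarith
      obtain ⟨x, hxS, hx⟩ : ∃ x ∈ S, x < lamHat' + δ := by
        by_contra h
        push_neg at h
        have := le_csInf hne h
        rw [← hlamHat'] at this; linarith
      have hxge : lamHat' ≤ x := hlamHat' ▸ csInf_le hbdd hxS
      have hd : dist x lamHat' < δ := by
        rw [Real.dist_eq, abs_of_nonneg (by linarith)]; linarith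
      have := hfd hxge hd
      rw [Real.dist_eq] at this
      have h2 := abs_lt.mp this
      linarith [hxS.2]
end
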